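/- Let φ be the ternary morphism with φ(0) = 01202120102, φ(1) = 01210201021, and φ(2) = 01210212021. Then φ preserves squarefreeness, and moreover, if w is a squarefree ternary word and p is a nonempty prefix of w, then φ(p) is a delicate squarefree ternary word. -/

import Mathlib

/-- A square is a word of the form XX with X nonempty. -/
def IsSquare' {α : Type*} (w : List α) : Prop :=
  ∃ X : List α, X ≠ [] ∧ w = X ++ X

/-- A word contains a square if some factor (contiguous subword) of it is a square. -/
def HasSquare {α : Type*} (w : List α) : Prop :=
  ∃ u, u <:+: w ∧ IsSquare' u

/-- A word is squarefree if none of its factors is a square. -/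
def SquareFree' {α : Type*} (w : List α) : Prop := ¬ HasSquare w

/-- A delicate squarefree ternary word: a nonempty squarefree word over {0,1,2}
such that changing any one of its letters to a different letter creates a square. -/
def DelicateSquareFree (w : List (Fin 3)) : Prop :=
  w ≠ [] ∧ SquareFree' w ∧
    ∀ (i : ℕ) (h : i < w.length) (a : Fin 3), a ≠ w.get ⟨i, h⟩ → HasSquare (w.set i a)

/-- Apply the morphism determined by letter images `h` to a word. -/
def applyMorphism {α : Type*} (h : α → List α) (w : List α) : List α := w.flatMap h

/-- The ternary morphism φ with φ(0) = 01202120102, φ(1) = 01210201021, φ(2) = 01210212021. -/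
def phi : Fin 3 → List (Fin 3) := fun a =>
  if a = 0 then [0,1,2,0,2,1,2,0,1,0,2]
  else if a = 1 then [0,1,2,1,0,2,0,1,0,2,1]
  else [0,1,2,1,0,2,1,2,0,2,1]

namespace PhiAux

/-! ### Segments -/

def seg {α : Type*} (l : List α) (s m : ℕ) : List α := (l.drop s).take m

lemma seg_infix {α : Type*} (l : List α) (s m : ℕ) : seg l s m <:+: l :=
  ((List.take_prefix _ _).isInfix).trans ((List.drop_suffix _ _).isInfix)

lemma seg_length {α : Type*} (l : List α) {s m : ℕ} (h : s + m ≤ l.length) :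
    (seg l s m).length = m := by
  simp only [seg, List.length_take, List.length_drop]; omega

lemma getElem?_seg {α : Type*} (l : List α) (s : ℕ) {m t : ℕ} (ht : t < m) :
    (seg l s m)[t]? = l[s+t]? := by
  rw [seg, List.getElem?_take_of_lt ht, List.getElem?_drop]

lemma seg_eq_of_pointwise {α : Type*} {l : List α} {s s' m : ℕ}
    (h : ∀ t < m, l[s+t]? = l[s'+t]?) : seg l s m = seg l s' m := by
  apply List.ext_getElem?
  intro t
  by_cases ht : t < m
  · rw [getElem?_seg _ _ ht, getElem?_seg _ _ ht, h t ht]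
  · rw [List.getElem?_eq_none, List.getElem?_eq_none] <;>
      · simp only [seg, List.length_take, List.length_drop]; omega

lemma pointwise_of_seg_eq {α : Type*} {l : List α} {s s' m : ℕ}
    (h : seg l s m = seg l s' m) : ∀ t < m, l[s+t]? = l[s'+t]? := by
  intro t ht
  rw [← getElem?_seg l s ht, h, getElem?_seg l s' ht]

lemma hasSquare_of_seg {α : Type*} {l : List α} {s m : ℕ} (hm : 1 ≤ m)
    (hlen : s + m + m ≤ l.length) (h : seg l s m = seg l (s+m) m) : HasSquare l := by
  refine ⟨seg l s m ++ seg l s m, ?_, seg l s m, ?_, rfl⟩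
  · have h2 : seg l s m ++ seg l (s+m) m = seg l s (m+m) := by
      simp only [seg]
      rw [List.take_add, List.drop_drop]
    rw [show seg l s m ++ seg l s m = seg l s m ++ seg l (s+m) m by rw [h], h2]
    exact seg_infix l s (m+m)
  · intro hX
    have := seg_length l (show s + m ≤ l.length by omega)
    rw [hX] at this
    simp at this
    omega

lemma exists_seg_of_hasSquare {α : Type*} {l : List α} (h : HasSquare l) :
    ∃ s m, 1 ≤ m ∧ s + m + m ≤ l.length ∧ seg l s m = seg l (s+m) m := by
  obtain ⟨u, ⟨p, q, rfl⟩, X, hX, rfl⟩ := h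
  refine ⟨p.length, X.length, List.length_pos_iff.mpr hX, by simp; omega, ?_⟩
  have h1 : seg (p ++ (X ++ X) ++ q) p.length X.length = X := by
    rw [seg, show p ++ (X ++ X) ++ q = p ++ ((X ++ X) ++ q) by simp, List.drop_left,
      show (X ++ X) ++ q = X ++ (X ++ q) by simp, List.take_left]
  have h2 : seg (p ++ (X ++ X) ++ q) (p.length + X.length) X.length = X := by
    rw [seg, show p ++ (X ++ X) ++ q = (p ++ X) ++ (X ++ q) by simp,
      show p.length + X.length = (p ++ X).length by simp, List.drop_left, List.take_left]
  rw [h1, h2]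

lemma sf_infix {α : Type*} {w u : List α} (hw : SquareFree' w) (hu : u <:+: w) :
    SquareFree' u := fun ⟨x, hx, h2⟩ => hw ⟨x, hx.trans hu, h2⟩

/-! ### Numeric encoding for fast decidability -/

def enc : List (Fin 3) → ℕ
  | [] => 0
  | a :: t => a.val + 4 * enc t

lemma enc_lt (w : List (Fin 3)) : enc w < 4 ^ w.length := by
  induction w with
  | nil => simp [enc]
  | cons a t ih =>
    have := a.isLt
    simp only [enc, List.length_cons, pow_succ]
    omega

lemma enc_drop (w : List (Fin 3)) (s : ℕ) : enc (w.drop s) = enc w / 4 ^ s := by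
  induction s generalizing w with
  | zero => simp
  | succ s ih =>
    cases w with
    | nil => simp [enc, Nat.zero_div]
    | cons a t =>
      rw [List.drop_succ_cons, ih t]
      have h1 : enc (a :: t) / 4 = enc t := by
        have := a.isLt
        simp only [enc]
        omega
      rw [pow_succ', ← Nat.div_div_eq_div_mul, h1]

lemma enc_take (w : List (Fin 3)) (m : ℕ) : enc (w.take m) = enc w % 4 ^ m := by
  induction m generalizing w with
  | zero => simp [enc, Nat.mod_one]
  | succ m ih =>
    cases w with
    | nil => simp [enc]
    | cons a t =>
      have hp : 0 < (4:ℕ)^m := pow_pos (by norm_num) _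
      have h2 : enc t % 4^m < 4^m := Nat.mod_lt _ hp
      have ha := a.isLt
      have h4 : (4:ℕ) ≤ 4*4^m := Nat.le_mul_of_pos_right 4 hp
      have hN : a.val % (4*4^m) = a.val := Nat.mod_eq_of_lt (by omega)
      have hsum : a.val + 4 * (enc t % 4^m) < 4*4^m := by omega
      simp only [List.take_succ_cons, enc, ih]
      rw [pow_succ']
      conv_rhs => rw [Nat.add_mod, Nat.mul_mod_mul_left, hN, Nat.mod_eq_of_lt hsum]

lemma enc_inj : ∀ {u v : List (Fin 3)}, u.length = v.length → enc u = enc v → u = v := by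
  intro u
  induction u with
  | nil =>
    intro v hl _
    cases v with
    | nil => rfl
    | cons b t => simp at hl
  | cons a t ih =>
    intro v hl he
    cases v with
    | nil => simp at hl
    | cons b t' =>
      simp only [List.length_cons] at hl
      simp only [enc] at he
      have ha := a.isLt
      have hb := b.isLt
      have h1 : a.val = b.val ∧ enc t = enc t' := by omega
      have : a = b := Fin.ext h1.1
      rw [this, ih (by omega) h1.2]

end PhiAux

namespace PhiAux2
open PhiAux

def NoSqN (N L : ℕ) : Prop :=
  ∀ s < L, ∀ m < L/2 + 1, ¬(1 ≤ m ∧ s + m + m ≤ L ∧ N / 4^s % 4^m = N / 4^(s+m) % 4^m)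

instance (N L : ℕ) : Decidable (NoSqN N L) :=
  inferInstanceAs (Decidable (∀ s < L, ∀ m < L/2 + 1,
    ¬(1 ≤ m ∧ s + m + m ≤ L ∧ N / 4^s % 4^m = N / 4^(s+m) % 4^m)))

lemma enc_seg (w : List (Fin 3)) (s m : ℕ) : enc (seg w s m) = enc w / 4^s % 4^m := by
  rw [seg, enc_take, enc_drop]

lemma squareFree_iff_NoSqN (w : List (Fin 3)) : SquareFree' w ↔ NoSqN (enc w) w.length := by
  constructor
  · rintro hsf s hs m hm ⟨h1, h2, h3⟩
    apply hsf
    apply hasSquare_of_seg h1 h2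
    apply enc_inj
    · rw [seg_length w (by omega), seg_length w (by omega)]
    · rw [enc_seg, enc_seg, h3]
  · intro hN hsq
    obtain ⟨s, m, h1, h2, h3⟩ := exists_seg_of_hasSquare hsq
    exact hN s (by omega) m (by omega) ⟨h1, h2, by rw [← enc_seg, ← enc_seg, h3]⟩

set_option maxRecDepth 100000 in
set_option maxHeartbeats 10000000 in
lemma L5 : ∀ a b c d e : Fin 3, NoSqN (enc [a,b,c,d,e]) 5 →
    NoSqN (enc (applyMorphism phi [a,b,c,d,e])) 55 := by decide

end PhiAux2

namespace PhiAux3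
open PhiAux PhiAux2

lemma phi_length : ∀ a : Fin 3, (phi a).length = 11 := by decide

lemma Phi_cons (a : Fin 3) (w : List (Fin 3)) :
    applyMorphism phi (a :: w) = phi a ++ applyMorphism phi w := by
  simp [applyMorphism]

lemma Phi_length (w : List (Fin 3)) : (applyMorphism phi w).length = 11 * w.length := by
  induction w with
  | nil => simp [applyMorphism]
  | cons a t ih => rw [Phi_cons]; simp [ih, phi_length]; ring

lemma Phi_getElem? (w : List (Fin 3)) (k r : ℕ) (hr : r < 11) :
    (applyMorphism phi w)[11*k + r]? = (w[k]?.bind fun a => (phi a)[r]?) := by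
  induction w generalizing k with
  | nil => simp [applyMorphism]
  | cons a t ih =>
    cases k with
    | zero =>
      rw [Phi_cons, show 11*0 + r = r by ring,
        List.getElem?_append_left (by rw [phi_length]; exact hr)]
      simp
    | succ k =>
      rw [Phi_cons, show 11*(k+1) + r = 11 + (11*k + r) by ring,
        List.getElem?_append_right (by rw [phi_length]; omega), phi_length,
        show 11 + (11*k + r) - 11 = 11*k + r by omega, ih k]
      simp

lemma Phi_get_some {w : List (Fin 3)} {k r : ℕ} (hr : r < 11) {a : Fin 3}
    (ha : w[k]? = some a) :
    (applyMorphism phi w)[11*k + r]? = (phi a)[r]? := by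
  rw [Phi_getElem? w k r hr, ha]
  rfl

lemma Phi_drop (w : List (Fin 3)) (k : ℕ) :
    applyMorphism phi (w.drop k) = (applyMorphism phi w).drop (11*k) := by
  induction k generalizing w with
  | zero => simp
  | succ k ih =>
    cases w with
    | nil => simp [applyMorphism]
    | cons a t =>
      rw [List.drop_succ_cons, ih t, Phi_cons,
        show 11*(k+1) = 11 + 11*k by ring, ← List.drop_drop,
        show (11:ℕ) = (phi a).length from (phi_length a).symm, List.drop_left]

lemma Phi_take (w : List (Fin 3)) (k : ℕ) :
    applyMorphism phi (w.take k) = (applyMorphism phi w).take (11*k) := by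
  induction k generalizing w with
  | zero => simp [applyMorphism]
  | succ k ih =>
    cases w with
    | nil => simp [applyMorphism]
    | cons a t =>
      rw [List.take_succ_cons, Phi_cons, ih t, Phi_cons,
        show 11*(k+1) = 11 + 11*k by ring, List.take_add,
        show (11:ℕ) = (phi a).length from (phi_length a).symm, List.take_left,
        List.drop_left]

lemma L_sync : ∀ (a b c : Fin 3), ∀ r < 11, 1 ≤ r →
    ¬ (∀ t < 11, (phi a)[t]? = (phi b ++ phi c)[r+t]?) := by decide

lemma L_eqLetter : ∀ a b : Fin 3, (∀ o < 11, (phi a)[o]? = (phi b)[o]?) → a = b := by decide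

lemma L_suf : ∀ a b : Fin 3, (∀ o < 11, 7 ≤ o → (phi a)[o]? = (phi b)[o]?) → a = b := by
  decide

lemma L_pre : ∀ a b : Fin 3, (∀ o < 11, o < 7 → (phi a)[o]? = (phi b)[o]?) → a = b := by
  decide

lemma L_delicate : ∀ (a : Fin 3), ∀ r < 11, ∀ x : Fin 3, (phi a)[r]? ≠ some x →
    ∃ s < 11, ∃ m < 11, 1 ≤ m ∧ s+m+m ≤ 11 ∧
      seg ((phi a).set r x) s m = seg ((phi a).set r x) (s+m) m := by decide

lemma L1 : ∀ a : Fin 3, NoSqN (enc (applyMorphism phi [a])) 11 := by decide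

set_option maxRecDepth 100000 in
lemma L2 : ∀ a b : Fin 3, NoSqN (enc [a,b]) 2 →
    NoSqN (enc (applyMorphism phi [a,b])) 22 := by decide

set_option maxRecDepth 100000 in
set_option maxHeartbeats 2000000 in
lemma L3 : ∀ a b c : Fin 3, NoSqN (enc [a,b,c]) 3 →
    NoSqN (enc (applyMorphism phi [a,b,c])) 33 := by decide

set_option maxRecDepth 100000 in
set_option maxHeartbeats 4000000 in
lemma L4 : ∀ a b c d : Fin 3, NoSqN (enc [a,b,c,d]) 4 →
    NoSqN (enc (applyMorphism phi [a,b,c,d])) 44 := by decide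

lemma sf_nil : SquareFree' ([] : List (Fin 3)) := by
  rintro ⟨u, hu, X, hX, rfl⟩
  rw [List.infix_nil] at hu
  exact hX (by simpa using (List.append_eq_nil_iff.mp hu).1)

lemma short_preserve (v : List (Fin 3)) (h5 : v.length ≤ 5) (hsf : SquareFree' v) :
    SquareFree' (applyMorphism phi v) := by
  rcases v with _ | ⟨a, _ | ⟨b, _ | ⟨c, _ | ⟨d, _ | ⟨e, _ | ⟨f, t⟩⟩⟩⟩⟩⟩
  · exact sf_nil
  · rw [squareFree_iff_NoSqN, Phi_length]
    exact L1 a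
  · rw [squareFree_iff_NoSqN] at hsf
    rw [squareFree_iff_NoSqN, Phi_length]
    exact L2 a b hsf
  · rw [squareFree_iff_NoSqN] at hsf
    rw [squareFree_iff_NoSqN, Phi_length]
    exact L3 a b c hsf
  · rw [squareFree_iff_NoSqN] at hsf
    rw [squareFree_iff_NoSqN, Phi_length]
    exact L4 a b c d hsf
  · rw [squareFree_iff_NoSqN] at hsf
    rw [squareFree_iff_NoSqN, Phi_length]
    exact PhiAux2.L5 a b c d e hsf
  · simp at h5; omega

end PhiAux3

namespace PhiMain
open PhiAux PhiAux2 PhiAux3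

lemma part1 : ∀ w : List (Fin 3), SquareFree' w → SquareFree' (applyMorphism phi w) := by
  intro w hw hsq
  obtain ⟨s, m, hm1, hlen, hseg⟩ := exists_seg_of_hasSquare hsq
  rw [Phi_length] at hlen
  set n := w.length with hn
  have hpt : ∀ t < m, (applyMorphism phi w)[s+t]? = (applyMorphism phi w)[s+m+t]? :=
    pointwise_of_seg_eq hseg
  by_cases hm20 : m ≤ 20
  · -- short square: lives inside the image of a factor of length ≤ 5
    have hdm : 11 * (s / 11) + s % 11 = s := Nat.div_add_mod s 11
    have hmod : s % 11 < 11 := Nat.mod_lt _ (by norm_num)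
    set j := s / 11 with hj
    set c := min 5 (n - j) with hc
    set v := seg w j c with hv
    have hjn : j < n := by omega
    have key : s + m + m ≤ 11 * j + 11 * c := by omega
    have hvlen : v.length = c := by
      rw [hv]; exact seg_length w (by omega)
    have hvsf : SquareFree' v := sf_infix hw (seg_infix w j c)
    have hΦv : SquareFree' (applyMorphism phi v) := short_preserve v (by omega) hvsf
    apply hΦv
    have hΦv_eq : applyMorphism phi v = seg (applyMorphism phi w) (11*j) (11*c) := by
      rw [hv, seg, seg, Phi_take, Phi_drop]
    apply hasSquare_of_seg (s := s - 11*j) (m := m) hm1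
    · rw [Phi_length, hvlen]; omega
    · apply seg_eq_of_pointwise
      intro t ht
      have e1 : ∀ u, u < 11*c → (applyMorphism phi v)[u]? = (applyMorphism phi w)[11*j + u]? := by
        intro u hu
        rw [hΦv_eq, getElem?_seg _ _ hu]
      rw [e1 _ (by omega), e1 _ (by omega),
        show 11*j + (s - 11*j + t) = s + t by omega,
        show 11*j + (s - 11*j + m + t) = s + m + t by omega]
      exact hpt t ht
  · -- long square: m ≥ 21
    push_neg at hm20
    have hdm : 11 * ((s+10) / 11) + (s+10) % 11 = s + 10 := Nat.div_add_mod _ 11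
    have hmod : (s+10) % 11 < 11 := Nat.mod_lt _ (by norm_num)
    set k0 := (s+10)/11 with hk0
    have hb1 : s ≤ 11 * k0 := by omega
    have hb2 : 11 * k0 ≤ s + 10 := by omega
    have hk0n : k0 < n := by omega
    obtain ⟨A, hA⟩ : ∃ a, w[k0]? = some a := ⟨_, List.getElem?_eq_getElem (by omega)⟩
    have hfull : ∀ t < 11, (phi A)[t]? = (applyMorphism phi w)[11*k0 + m + t]? := by
      intro t ht
      have h1 : (applyMorphism phi w)[11*k0 + t]? = (phi A)[t]? := Phi_get_some ht hA
      have h2 := hpt (11*k0 + t - s) (by omega)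
      rw [show s + (11*k0 + t - s) = 11*k0 + t by omega,
          show s + m + (11*k0 + t - s) = 11*k0 + m + t by omega] at h2
      rw [← h2, h1]
    have hdm2 : 11 * ((11*k0 + m) / 11) + (11*k0 + m) % 11 = 11*k0 + m :=
      Nat.div_add_mod _ 11
    have hmod2 : (11*k0 + m) % 11 < 11 := Nat.mod_lt _ (by norm_num)
    set kq := (11*k0 + m) / 11 with hkq
    set r := (11*k0 + m) % 11 with hr
    have hr0 : r = 0 := by
      by_contra hrne
      have hkq1 : kq + 1 < n := by omega
      obtain ⟨B0, hB0⟩ : ∃ a, w[kq]? = some a := ⟨_, List.getElem?_eq_getElem (by omega)⟩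
      obtain ⟨C0, hC0⟩ : ∃ a, w[kq+1]? = some a := ⟨_, List.getElem?_eq_getElem (by omega)⟩
      apply L_sync A B0 C0 r (by omega) (by omega)
      intro t ht
      rw [hfull t ht]
      by_cases htt : r + t < 11
      · rw [show 11*k0 + m + t = 11*kq + (r+t) by omega, Phi_get_some htt hB0,
          List.getElem?_append_left (by rw [phi_length]; exact htt)]
      · rw [show 11*k0 + m + t = 11*(kq+1) + (r+t-11) by omega,
          Phi_get_some (by omega) hC0,
          List.getElem?_append_right (by rw [phi_length]; omega), phi_length]
    set d := kq - k0 with hd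
    have hmd : m = 11 * d := by omega
    have hd2 : 2 ≤ d := by omega
    have hmid : ∀ t, 11*(k0+t) + 11 ≤ s + m → w[k0+t]? = w[k0+d+t]? := by
      intro t htb
      have hx : k0 + t < n := by omega
      have hy : k0 + d + t < n := by omega
      obtain ⟨B1, hB1⟩ : ∃ a, w[k0+t]? = some a := ⟨_, List.getElem?_eq_getElem (by omega)⟩
      obtain ⟨B2, hB2⟩ : ∃ a, w[k0+d+t]? = some a := ⟨_, List.getElem?_eq_getElem (by omega)⟩
      rw [hB1, hB2]
      have hBB : B1 = B2 := by
        apply L_eqLetter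
        intro o ho
        have h1 : (applyMorphism phi w)[11*(k0+t) + o]? = (phi B1)[o]? := Phi_get_some ho hB1
        have h2 : (applyMorphism phi w)[11*(k0+d+t) + o]? = (phi B2)[o]? := Phi_get_some ho hB2
        have h3 := hpt (11*(k0+t) + o - s) (by omega)
        rw [show s + (11*(k0+t) + o - s) = 11*(k0+t) + o by omega,
            show s + m + (11*(k0+t) + o - s) = 11*(k0+d+t) + o by omega] at h3
        rw [← h1, ← h2, h3]
      rw [hBB]
    by_cases hl0 : 11 * k0 = s
    · apply hw
      apply hasSquare_of_seg (s := k0) (m := d) (by omega) (by omega)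
      apply seg_eq_of_pointwise
      intro t ht
      exact hmid t (by omega)
    · have hl1 : s + 1 ≤ 11 * k0 := by omega
      have hk01 : 1 ≤ k0 := by omega
      have hBn : k0 + d - 1 < n := by omega
      have hCn : k0 + 2*d - 1 < n := by omega
      obtain ⟨A', hA'⟩ : ∃ a, w[k0-1]? = some a := ⟨_, List.getElem?_eq_getElem (by omega)⟩
      obtain ⟨B', hB'⟩ : ∃ a, w[k0+d-1]? = some a := ⟨_, List.getElem?_eq_getElem (by omega)⟩
      obtain ⟨C', hC'⟩ : ∃ a, w[k0+2*d-1]? = some a := ⟨_, List.getElem?_eq_getElem (by omega)⟩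
      have hAB : ∀ o < 11, s + 11 ≤ 11*k0 + o → (phi A')[o]? = (phi B')[o]? := by
        intro o ho hso
        have h1 : (applyMorphism phi w)[11*(k0-1) + o]? = (phi A')[o]? := Phi_get_some ho hA'
        have h2 : (applyMorphism phi w)[11*(k0+d-1) + o]? = (phi B')[o]? := Phi_get_some ho hB'
        have h3 := hpt (11*(k0-1) + o - s) (by omega)
        rw [show s + (11*(k0-1) + o - s) = 11*(k0-1) + o by omega,
            show s + m + (11*(k0-1) + o - s) = 11*(k0+d-1) + o by omega] at h3
        rw [← h1, ← h2, h3]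
      have hBC : ∀ o < 11, 11*k0 + o < s + 11 → (phi B')[o]? = (phi C')[o]? := by
        intro o ho hso
        have h1 : (applyMorphism phi w)[11*(k0+d-1) + o]? = (phi B')[o]? := Phi_get_some ho hB'
        have h2 : (applyMorphism phi w)[11*(k0+2*d-1) + o]? = (phi C')[o]? := Phi_get_some ho hC'
        have h3 := hpt (11*(k0+d-1) + o - s) (by omega)
        rw [show s + (11*(k0+d-1) + o - s) = 11*(k0+d-1) + o by omega,
            show s + m + (11*(k0+d-1) + o - s) = 11*(k0+2*d-1) + o by omega] at h3
        rw [← h1, ← h2, h3]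
      by_cases hc4 : s + 4 ≤ 11 * k0
      · have hABeq : A' = B' := L_suf _ _ (fun o ho h7 => hAB o ho (by omega))
        apply hw
        apply hasSquare_of_seg (s := k0 - 1) (m := d) (by omega) (by omega)
        apply seg_eq_of_pointwise
        intro t ht
        rcases Nat.eq_zero_or_pos t with rfl | htpos
        · rw [show k0 - 1 + 0 = k0 - 1 by omega, show k0 - 1 + d + 0 = k0 + d - 1 by omega,
            hA', hB', hABeq]
        · rw [show k0 - 1 + t = k0 + (t-1) by omega,
            show k0 - 1 + d + t = k0 + d + (t-1) by omega]
          exact hmid (t-1) (by omega)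
      · have hBCeq : B' = C' := L_pre _ _ (fun o ho h7 => hBC o ho (by omega))
        apply hw
        apply hasSquare_of_seg (s := k0) (m := d) (by omega) (by omega)
        apply seg_eq_of_pointwise
        intro t ht
        by_cases htd : t = d - 1
        · rw [show k0 + t = k0 + d - 1 by omega, show k0 + d + t = k0 + 2*d - 1 by omega,
            hB', hC', hBCeq]
        · exact hmid t (by omega)

lemma part2 : ∀ w p : List (Fin 3), SquareFree' w → p ≠ [] → p <+: w →
    DelicateSquareFree (applyMorphism phi p) := by
  intro w p hw hp hpre
  have hpsf : SquareFree' p := sf_infix hw hpre.isInfix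
  have hplen : 0 < p.length := List.length_pos_iff.mpr hp
  refine ⟨?_, part1 p hpsf, ?_⟩
  · exact List.ne_nil_of_length_pos (by rw [Phi_length]; omega)
  · intro i h x hx
    have hΦlen : (applyMorphism phi p).length = 11 * p.length := Phi_length p
    have hdm : 11 * (i / 11) + i % 11 = i := Nat.div_add_mod i 11
    have hmod : i % 11 < 11 := Nat.mod_lt _ (by norm_num)
    rw [hΦlen] at h
    set k := i / 11 with hk
    set r := i % 11 with hr
    have hkp : k < p.length := by omega
    obtain ⟨a, ha⟩ : ∃ a, p[k]? = some a := ⟨_, List.getElem?_eq_getElem hkp⟩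
    have hget : (applyMorphism phi p)[i]? = (phi a)[r]? := by
      rw [show i = 11*k + r by omega]
      exact Phi_get_some hmod ha
    have hxne : (phi a)[r]? ≠ some x := by
      rw [← hget, List.getElem?_eq_getElem (by omega : i < (applyMorphism phi p).length)]
      intro hcon
      apply hx
      rw [List.get_eq_getElem]
      exact (Option.some_inj.mp hcon).symm
    obtain ⟨s2, hs2, m2, hm2, h1, h2, h3⟩ := L_delicate a r hmod x hxne
    have hsq : HasSquare ((phi a).set r x) :=
      hasSquare_of_seg h1 (by rw [List.length_set, phi_length]; exact h2) h3
    -- decompose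
    have hdrop : p.drop k = a :: p.drop (k+1) := by
      rw [List.drop_eq_getElem_cons hkp]
      congr 1
      have := List.getElem?_eq_getElem hkp
      rw [ha] at this
      exact (Option.some_inj.mp this).symm
    have hdecomp : (applyMorphism phi p).set i x =
        applyMorphism phi (p.take k) ++ ((phi a).set r x ++ applyMorphism phi (p.drop (k+1))) := by
      have h0 : applyMorphism phi p =
          applyMorphism phi (p.take k) ++ (phi a ++ applyMorphism phi (p.drop (k+1))) := by
        conv_lhs => rw [← List.take_append_drop k p]
        rw [show applyMorphism phi (p.take k ++ p.drop k)
            = applyMorphism phi (p.take k) ++ applyMorphism phi (p.drop k) by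
          simp only [applyMorphism, List.flatMap_append], hdrop, Phi_cons]
      have hlen1 : (applyMorphism phi (p.take k)).length = 11*k := by
        rw [Phi_length, List.length_take]; omega
      rw [h0, List.set_append_right _ _ (by rw [hlen1]; omega), hlen1,
        show i - 11*k = r by omega,
        List.set_append_left _ _ (by rw [phi_length]; omega)]
    obtain ⟨u, hu, husq⟩ := hsq
    refine ⟨u, ?_, husq⟩
    apply hu.trans
    rw [hdecomp]
    exact ⟨applyMorphism phi (p.take k), applyMorphism phi (p.drop (k+1)),
      by rw [List.append_assoc]⟩

end PhiMain

theorem phi_preserves_squarefree_and_delicate :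
    (∀ w : List (Fin 3), SquareFree' w → SquareFree' (applyMorphism phi w)) ∧
    (∀ w p : List (Fin 3), SquareFree' w → p ≠ [] → p <+: w →
      DelicateSquareFree (applyMorphism phi p)) := by
  exact ⟨PhiMain.part1, PhiMain.part2⟩
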